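/- For all real numbers ε ≥ 0 and 0 ≤ δ ≤ 1, (e^ε + 2δ − 1)/(e^ε + 1) ≤ 1 − 2(1 − δ)(e^ε + δ)/(e^ε + 1)². That is, the influence of the optimal joint balanced binary (ε,δ)-differentially private mechanism is at most the influence of the optimal independent one. -/

import Mathlib

open Real

/-- The influence of the optimal joint balanced binary (ε,δ)-DP mechanism is at most
the influence of the optimal independent one. -/
theorem joint_influence_le_independent_influence
    (ε δ : ℝ) (hε : 0 ≤ ε) (hδ₀ : 0 ≤ δ) (hδ₁ : δ ≤ 1) :
    (Real.exp ε + 2 * δ - 1) / (Real.exp ε + 1)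
      ≤ 1 - 2 * (1 - δ) * (Real.exp ε + δ) / (Real.exp ε + 1) ^ 2 := by
  have ha : (1:ℝ) ≤ Real.exp ε := by
    simpa using Real.one_le_exp hε
  set a := Real.exp ε
  have hpos : 0 < a + 1 := by linarith
  have h2 : (0:ℝ) < (a+1)^2 := by positivity
  rw [div_le_iff₀ hpos, sub_div' (ne_of_gt h2), div_mul_eq_mul_div,
    le_div_iff₀ h2]
  nlinarith [sq_nonneg (1 - δ), sq_nonneg (a+1)]
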